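/- Conditional variance bound for empirical OLS: let K be spanned by functions p₁,...,p_K, let X₁,...,X_M be i.i.d., let G∨H be a σ-algebra making all p_j(X_m) measurable, and suppose the conditional variances satisfy E[|S(X_m) - E[S(X_m)|G∨H]|² | G∨H] ≤ σ² a.s. for each m, with the residuals conditionally independent across m. If S* solves the empirical least-squares problem, then E[ (1/M)Σ_m |S*(X_m) - E[S*(X_m)|G∨H]|² | G∨H ] ≤ σ² K / M. -/

import Mathlib

open MeasureTheory Finset

section Aux

variable {Ω : Type*} {G : MeasurableSpace Ω} [m0 : MeasurableSpace Ω]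
  {μ : MeasureTheory.Measure Ω}

lemma aux_memTop_mul {f g : Ω → ℝ} (hf : MemLp f ⊤ μ) (hg : MemLp g ⊤ μ) :
    MemLp (fun ω => f ω * g ω) ⊤ μ := by
  have h := hg.smul (r := ⊤) hf
  have e : f • g = fun ω => f ω * g ω := by funext ω; simp [smul_eq_mul]
  rwa [e] at h

lemma aux_integrable_top_mul {f g : Ω → ℝ} (hf : MemLp f ⊤ μ) (hg : Integrable g μ) :
    Integrable (fun ω => f ω * g ω) μ := by
  have h := (memLp_one_iff_integrable.mpr hg).smul (r := 1) hf
  have e : f • g = fun ω => f ω * g ω := by funext ω; simp [smul_eq_mul]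
  rw [e] at h
  exact memLp_one_iff_integrable.mp h

lemma aux_integrable_L2_mul {f g : Ω → ℝ} (hf : MemLp f 2 μ) (hg : MemLp g 2 μ) :
    Integrable (fun ω => f ω * g ω) μ := by
  have hpqr : (1 : ENNReal) / 1 = 1 / 2 + 1 / 2 := by
    rw [one_div_one, ENNReal.div_add_div_same, one_add_one_eq_two,
      ENNReal.div_self (by norm_num) (by norm_num)]
  have h := hg.smul (r := 1) hf
  have e : f • g = fun ω => f ω * g ω := by funext ω; simp [smul_eq_mul]
  rw [e] at h
  exact memLp_one_iff_integrable.mp h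

lemma aux_pullout {g f : Ω → ℝ} (hgm : StronglyMeasurable[G] g) (hgb : MemLp g ⊤ μ)
    (hf : Integrable f μ) :
    μ[fun ω => g ω * f ω|G] =ᵐ[μ] fun ω => g ω * (μ[f|G]) ω := by
  have hint : Integrable (g * f) μ := aux_integrable_top_mul hgb hf
  exact condExp_mul_of_stronglyMeasurable_left hgm hint hf

lemma aux_memℒp_two_condexp (hG : G ≤ m0) [IsProbabilityMeasure μ] {f : Ω → ℝ}
    (hf : MemLp f 2 μ) : MemLp (μ[f|G]) 2 μ := by
  set g := condExpL2 ℝ ℝ hG (hf.toLp f) with hgdef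
  have hmeas : AEStronglyMeasurable[G] (g : Ω → ℝ) μ :=
    aestronglyMeasurable_condExpL2 hG (hf.toLp f)
  have heq : (g : Ω → ℝ) =ᵐ[μ] μ[f|G] := by
    refine ae_eq_condExp_of_forall_setIntegral_eq hG (hf.integrable one_le_two)
      (fun s _ _ => ((Lp.memLp (g : Lp ℝ 2 μ)).integrable one_le_two).integrableOn)
      (fun s hs hμs => ?_) hmeas
    rw [integral_condExpL2_eq hG (hf.toLp f) hs hμs.ne]
    exact setIntegral_congr_ae (hG s hs) ((hf.coeFn_toLp).mono fun x hx _ => hx)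
  exact (Lp.memLp (g : Lp ℝ 2 μ)).ae_eq heq

lemma aux_key (μ : MeasureTheory.Measure Ω) [IsProbabilityMeasure μ] (hG : G ≤ m0)
    (M K : ℕ) (σ : ℝ)
    (Pm : Fin K → Fin M → Ω → ℝ) (ε : Fin M → Ω → ℝ)
    (hPmeas : ∀ j m, StronglyMeasurable[G] (Pm j m))
    (hPbdd : ∀ j m, MemLp (Pm j m) ⊤ μ)
    (hε2 : ∀ m, MemLp (ε m) 2 μ)
    (horthd : ∀ j, (fun ω => (M : ℝ)⁻¹ * ∑ m, Pm j m ω * Pm j m ω) =ᵐ[μ] fun _ => (1 : ℝ))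
    (hvar : ∀ m, μ[fun ω => ε m ω * ε m ω|G] ≤ᵐ[μ] fun _ => σ ^ 2)
    (hcross : ∀ m m', m ≠ m' →
      μ[fun ω => ε m ω * ε m' ω|G] =ᵐ[μ] fun _ => (0 : ℝ)) :
    μ[fun ω => ∑ j, ((M : ℝ)⁻¹ * ∑ m, Pm j m ω * ε m ω) *
        ((M : ℝ)⁻¹ * ∑ m, Pm j m ω * ε m ω)|G]
      ≤ᵐ[μ] fun _ => σ ^ 2 * K / M := by
  have hεint : ∀ m m', Integrable (fun ω => ε m ω * ε m' ω) μ :=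
    fun m m' => aux_integrable_L2_mul (hε2 m) (hε2 m')
  have hcb : ∀ (j : Fin K) (m m' : Fin M),
      MemLp (fun ω => ((M : ℝ)⁻¹ * (M : ℝ)⁻¹) * (Pm j m ω * Pm j m' ω)) ⊤ μ :=
    fun j m m' => (aux_memTop_mul (hPbdd j m) (hPbdd j m')).const_mul _
  have hcm : ∀ (j : Fin K) (m m' : Fin M),
      StronglyMeasurable[G] (fun ω => ((M : ℝ)⁻¹ * (M : ℝ)⁻¹) * (Pm j m ω * Pm j m' ω)) :=
    fun j m m' => stronglyMeasurable_const.mul ((hPmeas j m).mul (hPmeas j m'))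
  have hVdec : (fun ω => ∑ j, ((M : ℝ)⁻¹ * ∑ m, Pm j m ω * ε m ω) *
        ((M : ℝ)⁻¹ * ∑ m, Pm j m ω * ε m ω))
      = ∑ p : Fin K × Fin M × Fin M, fun ω =>
          (((M : ℝ)⁻¹ * (M : ℝ)⁻¹) * (Pm p.1 p.2.1 ω * Pm p.1 p.2.2 ω)) *
            (ε p.2.1 ω * ε p.2.2 ω) := by
    funext ω
    simp only [Finset.sum_apply]
    rw [Fintype.sum_prod_type]
    refine Finset.sum_congr rfl fun j _ => ?_
    rw [Fintype.sum_prod_type]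
    rw [show ((M : ℝ)⁻¹ * ∑ m, Pm j m ω * ε m ω) * ((M : ℝ)⁻¹ * ∑ m, Pm j m ω * ε m ω)
        = ((M : ℝ)⁻¹ * (M : ℝ)⁻¹) *
          ((∑ m, Pm j m ω * ε m ω) * (∑ m, Pm j m ω * ε m ω)) from by ring]
    rw [Finset.sum_mul_sum, Finset.mul_sum]
    refine Finset.sum_congr rfl fun m _ => ?_
    rw [Finset.mul_sum]
    exact Finset.sum_congr rfl fun m' _ => by ring
  have hint : ∀ p : Fin K × Fin M × Fin M,
      Integrable (fun ω => (((M : ℝ)⁻¹ * (M : ℝ)⁻¹) * (Pm p.1 p.2.1 ω * Pm p.1 p.2.2 ω)) *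
        (ε p.2.1 ω * ε p.2.2 ω)) μ :=
    fun p => aux_integrable_top_mul (hcb _ _ _) (hεint _ _)
  have hce : μ[fun ω => ∑ j, ((M : ℝ)⁻¹ * ∑ m, Pm j m ω * ε m ω) *
        ((M : ℝ)⁻¹ * ∑ m, Pm j m ω * ε m ω)|G]
      =ᵐ[μ] ∑ p : Fin K × Fin M × Fin M,
        μ[fun ω => (((M : ℝ)⁻¹ * (M : ℝ)⁻¹) * (Pm p.1 p.2.1 ω * Pm p.1 p.2.2 ω)) *
          (ε p.2.1 ω * ε p.2.2 ω)|G] := by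
    rw [hVdec]; exact condExp_finsetSum (fun p _ => hint p) G
  have hpull : ∀ᵐ ω ∂μ, ∀ p : Fin K × Fin M × Fin M,
      (μ[fun ω' => (((M : ℝ)⁻¹ * (M : ℝ)⁻¹) * (Pm p.1 p.2.1 ω' * Pm p.1 p.2.2 ω')) *
        (ε p.2.1 ω' * ε p.2.2 ω')|G]) ω
        = (((M : ℝ)⁻¹ * (M : ℝ)⁻¹) * (Pm p.1 p.2.1 ω * Pm p.1 p.2.2 ω)) *
          (μ[fun ω' => ε p.2.1 ω' * ε p.2.2 ω'|G]) ω :=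
    ae_all_iff.mpr fun p => aux_pullout (hcm _ _ _) (hcb _ _ _) (hεint _ _)
  have hvar' : ∀ᵐ ω ∂μ, ∀ m : Fin M,
      (μ[fun ω' => ε m ω' * ε m ω'|G]) ω ≤ σ ^ 2 := ae_all_iff.mpr fun m => hvar m
  have hcross' : ∀ᵐ ω ∂μ, ∀ m m' : Fin M, m ≠ m' →
      (μ[fun ω' => ε m ω' * ε m' ω'|G]) ω = 0 :=
    ae_all_iff.mpr fun m => ae_all_iff.mpr fun m' => by
      by_cases h : m = m'
      · exact Filter.Eventually.of_forall fun ω hne => absurd h hne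
      · exact (hcross m m' h).mono fun ω hω _ => hω
  have horth' : ∀ᵐ ω ∂μ, ∀ j : Fin K,
      (M : ℝ)⁻¹ * ∑ m, Pm j m ω * Pm j m ω = 1 := ae_all_iff.mpr fun j => horthd j
  filter_upwards [hce, hpull, hvar', hcross', horth'] with ω h1 h2 h3 h4 h5
  calc (μ[fun ω => ∑ j, ((M : ℝ)⁻¹ * ∑ m, Pm j m ω * ε m ω) *
        ((M : ℝ)⁻¹ * ∑ m, Pm j m ω * ε m ω)|G]) ω
      = ∑ p : Fin K × Fin M × Fin M,
          (μ[fun ω' => (((M : ℝ)⁻¹ * (M : ℝ)⁻¹) * (Pm p.1 p.2.1 ω' * Pm p.1 p.2.2 ω')) *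
            (ε p.2.1 ω' * ε p.2.2 ω')|G]) ω := by rw [h1]; simp [Finset.sum_apply]
    _ = ∑ p : Fin K × Fin M × Fin M,
          (((M : ℝ)⁻¹ * (M : ℝ)⁻¹) * (Pm p.1 p.2.1 ω * Pm p.1 p.2.2 ω)) *
            (μ[fun ω' => ε p.2.1 ω' * ε p.2.2 ω'|G]) ω :=
        Finset.sum_congr rfl fun p _ => h2 p
    _ = ∑ j, ∑ m, ∑ m', (((M : ℝ)⁻¹ * (M : ℝ)⁻¹) * (Pm j m ω * Pm j m' ω)) *
          (μ[fun ω' => ε m ω' * ε m' ω'|G]) ω := by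
        rw [Fintype.sum_prod_type]
        exact Finset.sum_congr rfl fun j _ => Fintype.sum_prod_type _
    _ = ∑ j, ∑ m, (((M : ℝ)⁻¹ * (M : ℝ)⁻¹) * (Pm j m ω * Pm j m ω)) *
          (μ[fun ω' => ε m ω' * ε m ω'|G]) ω := by
        refine Finset.sum_congr rfl fun j _ => Finset.sum_congr rfl fun m _ => ?_
        refine Finset.sum_eq_single_of_mem m (Finset.mem_univ m) fun m' _ hm' => ?_
        rw [h4 m m' (fun h => hm' h.symm), mul_zero]
    _ ≤ ∑ j, ∑ m, (((M : ℝ)⁻¹ * (M : ℝ)⁻¹) * (Pm j m ω * Pm j m ω)) * σ ^ 2 := by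
        refine Finset.sum_le_sum fun j _ => Finset.sum_le_sum fun m _ => ?_
        refine mul_le_mul_of_nonneg_left (h3 m) ?_
        have : (0 : ℝ) ≤ Pm j m ω * Pm j m ω := mul_self_nonneg _
        positivity
    _ = ∑ j : Fin K, (σ ^ 2 * (M : ℝ)⁻¹) * ((M : ℝ)⁻¹ * ∑ m, Pm j m ω * Pm j m ω) := by
        refine Finset.sum_congr rfl fun j _ => ?_
        simp only [Finset.mul_sum]
        exact Finset.sum_congr rfl fun m _ => by ring
    _ = ∑ _j : Fin K, σ ^ 2 * (M : ℝ)⁻¹ := by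
        refine Finset.sum_congr rfl fun j _ => ?_
        rw [h5 j, mul_one]
    _ = σ ^ 2 * K / M := by
        rw [Finset.sum_const, Finset.card_univ, Fintype.card_fin, nsmul_eq_mul]
        ring

end Aux

/-- Conditional variance bound for empirical OLS: with design variables
`Pm j m` (the values `p_j(X_m)`), measurable w.r.t. `G∨H` (here a single
σ-algebra `G`), orthonormal for the empirical inner product, targets `S m` with
conditionally independent residuals of conditional variance at most `σ²`, the
empirical projection `S*` satisfies
`E[(1/M) Σ_m |S*(X_m) - E[S*(X_m)|G]|² | G] ≤ σ² K / M` a.s. -/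
theorem ols_conditional_variance_bound
    {Ω : Type*} [m0 : MeasurableSpace Ω]
    (μ : Measure Ω) [IsProbabilityMeasure μ]
    (G : MeasurableSpace Ω) (hG : G ≤ m0)
    (M K : ℕ) (hM : 0 < M) (σ : ℝ)
    (Pm : Fin K → Fin M → Ω → ℝ) (S : Fin M → Ω → ℝ)
    -- the design variables are G-measurable and bounded; the targets are in L²
    (hPmeas : ∀ j m, StronglyMeasurable[G] (Pm j m))
    (hPbdd : ∀ j m, MemLp (Pm j m) ⊤ μ)
    (hS : ∀ m, MemLp (S m) 2 μ)
    -- empirical orthonormality of the design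
    (horth : ∀ j j',
      (fun ω => (M : ℝ)⁻¹ * ∑ m, Pm j m ω * Pm j' m ω) =ᵐ[μ]
        fun _ => if j = j' then (1 : ℝ) else 0)
    -- conditional variance bound on the residuals
    (hvar : ∀ m,
      μ[fun ω => (S m ω - (μ[S m|G]) ω) ^ 2 | G] ≤ᵐ[μ] fun _ => σ ^ 2)
    -- residuals are conditionally uncorrelated across samples
    (hcross : ∀ m m', m ≠ m' →
      μ[fun ω => (S m ω - (μ[S m|G]) ω) * (S m' ω - (μ[S m'|G]) ω) | G]
        =ᵐ[μ] fun _ => (0 : ℝ))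
    -- the empirical least-squares projection evaluated at the samples
    (Sstar : Fin M → Ω → ℝ)
    (hSstar : ∀ m, Sstar m = fun ω =>
      ∑ j, ((M : ℝ)⁻¹ * ∑ m', Pm j m' ω * S m' ω) * Pm j m ω) :
    μ[fun ω => (M : ℝ)⁻¹ * ∑ m, (Sstar m ω - (μ[Sstar m|G]) ω) ^ 2 | G]
      ≤ᵐ[μ] fun _ => σ ^ 2 * K / M := by
  letI : MeasurableSpace Ω := m0
  have hSint : ∀ m, Integrable (S m) μ := fun m => (hS m).integrable one_le_two
  have hCE2 : ∀ m, MemLp (μ[S m|G]) 2 μ := fun m => aux_memℒp_two_condexp hG (hS m)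
  have hε2 : ∀ m, MemLp (fun ω => S m ω - (μ[S m|G]) ω) 2 μ := fun m => (hS m).sub (hCE2 m)
  -- Claim A : residual of the projection
  have hA : ∀ m : Fin M, (fun ω => Sstar m ω - (μ[Sstar m|G]) ω) =ᵐ[μ]
      (fun ω => ∑ j, ((M : ℝ)⁻¹ * ∑ m', Pm j m' ω * (S m' ω - (μ[S m'|G]) ω)) * Pm j m ω) := by
    intro m
    have hq : ∀ (j : Fin K) (m' : Fin M),
        MemLp (fun ω => (M : ℝ)⁻¹ * (Pm j m' ω * Pm j m ω)) ⊤ μ :=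
      fun j m' => (aux_memTop_mul (hPbdd j m') (hPbdd j m)).const_mul _
    have hqm : ∀ (j : Fin K) (m' : Fin M),
        StronglyMeasurable[G] (fun ω => (M : ℝ)⁻¹ * (Pm j m' ω * Pm j m ω)) :=
      fun j m' => stronglyMeasurable_const.mul ((hPmeas j m').mul (hPmeas j m))
    have hdec : Sstar m = ∑ p : Fin K × Fin M, fun ω =>
        ((M : ℝ)⁻¹ * (Pm p.1 p.2 ω * Pm p.1 m ω)) * S p.2 ω := by
      rw [hSstar m]; funext ω
      simp only [Finset.sum_apply]
      rw [Fintype.sum_prod_type]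
      refine Finset.sum_congr rfl fun j _ => ?_
      rw [Finset.mul_sum, Finset.sum_mul]
      exact Finset.sum_congr rfl fun m' _ => by ring
    have hint : ∀ p : Fin K × Fin M,
        Integrable (fun ω => ((M : ℝ)⁻¹ * (Pm p.1 p.2 ω * Pm p.1 m ω)) * S p.2 ω) μ :=
      fun p => aux_integrable_top_mul (hq p.1 p.2) (hSint p.2)
    have hce : μ[Sstar m|G] =ᵐ[μ] ∑ p : Fin K × Fin M,
        μ[fun ω => ((M : ℝ)⁻¹ * (Pm p.1 p.2 ω * Pm p.1 m ω)) * S p.2 ω|G] := by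
      rw [hdec]; exact condExp_finsetSum (fun p _ => hint p) G
    have hpull : ∀ᵐ ω ∂μ, ∀ p : Fin K × Fin M,
        (μ[fun ω' => ((M : ℝ)⁻¹ * (Pm p.1 p.2 ω' * Pm p.1 m ω')) * S p.2 ω'|G]) ω
          = ((M : ℝ)⁻¹ * (Pm p.1 p.2 ω * Pm p.1 m ω)) * (μ[S p.2|G]) ω :=
      ae_all_iff.mpr fun p => aux_pullout (hqm p.1 p.2) (hq p.1 p.2) (hSint p.2)
    filter_upwards [hce, hpull] with ω h1 h2
    have h2' : ∑ p : Fin K × Fin M,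
        (μ[fun ω' => ((M : ℝ)⁻¹ * (Pm p.1 p.2 ω' * Pm p.1 m ω')) * S p.2 ω'|G]) ω
        = ∑ j, ∑ m', ((M : ℝ)⁻¹ * (Pm j m' ω * Pm j m ω)) * (μ[S m'|G]) ω := by
      rw [Fintype.sum_prod_type]
      exact Finset.sum_congr rfl fun j _ => Finset.sum_congr rfl fun m' _ => h2 (j, m')
    rw [h1, Finset.sum_apply, h2']
    simp only [hSstar]
    have e1 : ∀ T : Fin M → ℝ,
        ∑ j, ((M : ℝ)⁻¹ * ∑ m', Pm j m' ω * T m') * Pm j m ω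
          = ∑ j, ∑ m', ((M : ℝ)⁻¹ * (Pm j m' ω * Pm j m ω)) * T m' := by
      intro T
      refine Finset.sum_congr rfl fun j _ => ?_
      rw [Finset.mul_sum, Finset.sum_mul]
      exact Finset.sum_congr rfl fun m' _ => by ring
    have eL := e1 (fun m' => S m' ω)
    have eR := e1 (fun m' => S m' ω - (μ[S m'|G]) ω)
    rw [eL, eR, ← Finset.sum_sub_distrib]
    refine Finset.sum_congr rfl fun j _ => ?_
    rw [← Finset.sum_sub_distrib]
    exact Finset.sum_congr rfl fun m' _ => by ring
  -- Step 1 : rewrite the empirical variance via orthonormality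
  have alg : ∀ (x : Fin K → ℝ) (y : Fin K → Fin M → ℝ),
      (M : ℝ)⁻¹ * ∑ m, (∑ j, x j * y j m) ^ 2
        = ∑ j, ∑ j', (x j * x j') * ((M : ℝ)⁻¹ * ∑ m, y j m * y j' m) := by
    intro x y
    calc (M : ℝ)⁻¹ * ∑ m, (∑ j, x j * y j m) ^ 2
        = ∑ m, ∑ j, ∑ j', (M : ℝ)⁻¹ * ((x j * y j m) * (x j' * y j' m)) := by
          rw [Finset.mul_sum]
          refine Finset.sum_congr rfl fun m _ => ?_
          rw [pow_two, Finset.sum_mul_sum, Finset.mul_sum]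
          refine Finset.sum_congr rfl fun j _ => ?_
          rw [Finset.mul_sum]
      _ = ∑ j, ∑ j', (x j * x j') * ((M : ℝ)⁻¹ * ∑ m, y j m * y j' m) := by
          rw [Finset.sum_comm]
          refine Finset.sum_congr rfl fun j _ => ?_
          rw [Finset.sum_comm]
          refine Finset.sum_congr rfl fun j' _ => ?_
          rw [Finset.mul_sum, Finset.mul_sum]
          exact Finset.sum_congr rfl fun m _ => by ring
  have hstep1 : (fun ω => (M : ℝ)⁻¹ * ∑ m, (Sstar m ω - (μ[Sstar m|G]) ω) ^ 2) =ᵐ[μ]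
      (fun ω => ∑ j, ((M : ℝ)⁻¹ * ∑ m', Pm j m' ω * (S m' ω - (μ[S m'|G]) ω)) *
        ((M : ℝ)⁻¹ * ∑ m', Pm j m' ω * (S m' ω - (μ[S m'|G]) ω))) := by
    have hAall : ∀ᵐ ω ∂μ, ∀ m : Fin M, Sstar m ω - (μ[Sstar m|G]) ω
        = ∑ j, ((M : ℝ)⁻¹ * ∑ m', Pm j m' ω * (S m' ω - (μ[S m'|G]) ω)) * Pm j m ω :=
      ae_all_iff.mpr fun m => hA m
    have horthall : ∀ᵐ ω ∂μ, ∀ j j' : Fin K,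
        (M : ℝ)⁻¹ * ∑ m, Pm j m ω * Pm j' m ω = if j = j' then 1 else 0 :=
      ae_all_iff.mpr fun j => ae_all_iff.mpr fun j' => horth j j'
    filter_upwards [hAall, horthall] with ω h1 h2
    calc (M : ℝ)⁻¹ * ∑ m, (Sstar m ω - (μ[Sstar m|G]) ω) ^ 2
        = (M : ℝ)⁻¹ * ∑ m, (∑ j, ((M : ℝ)⁻¹ * ∑ m', Pm j m' ω *
            (S m' ω - (μ[S m'|G]) ω)) * Pm j m ω) ^ 2 := by
          congr 1
          exact Finset.sum_congr rfl fun m _ => by rw [h1 m]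
      _ = ∑ j, ∑ j', (((M : ℝ)⁻¹ * ∑ m', Pm j m' ω * (S m' ω - (μ[S m'|G]) ω)) *
            ((M : ℝ)⁻¹ * ∑ m', Pm j' m' ω * (S m' ω - (μ[S m'|G]) ω))) *
            ((M : ℝ)⁻¹ * ∑ m, Pm j m ω * Pm j' m ω) :=
          alg (fun j => (M : ℝ)⁻¹ * ∑ m', Pm j m' ω * (S m' ω - (μ[S m'|G]) ω))
            (fun j m => Pm j m ω)
      _ = ∑ j, ∑ j', (((M : ℝ)⁻¹ * ∑ m', Pm j m' ω * (S m' ω - (μ[S m'|G]) ω)) *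
            ((M : ℝ)⁻¹ * ∑ m', Pm j' m' ω * (S m' ω - (μ[S m'|G]) ω))) *
            (if j = j' then (1 : ℝ) else 0) := by
          refine Finset.sum_congr rfl fun j _ => Finset.sum_congr rfl fun j' _ => ?_
          rw [h2 j j']
      _ = ∑ j, ((M : ℝ)⁻¹ * ∑ m', Pm j m' ω * (S m' ω - (μ[S m'|G]) ω)) *
            ((M : ℝ)⁻¹ * ∑ m', Pm j m' ω * (S m' ω - (μ[S m'|G]) ω)) := by
          refine Finset.sum_congr rfl fun j _ => ?_
          simp [mul_ite, mul_one, mul_zero, Finset.sum_ite_eq]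
  -- apply the key lemma
  have horthd : ∀ j : Fin K,
      (fun ω => (M : ℝ)⁻¹ * ∑ m, Pm j m ω * Pm j m ω) =ᵐ[μ] fun _ => (1 : ℝ) := by
    intro j
    have := horth j j
    simpa using this
  have hvar' : ∀ m : Fin M,
      μ[fun ω => (S m ω - (μ[S m|G]) ω) * (S m ω - (μ[S m|G]) ω)|G]
        ≤ᵐ[μ] fun _ => σ ^ 2 := by
    intro m
    have e : (fun ω => (S m ω - (μ[S m|G]) ω) * (S m ω - (μ[S m|G]) ω))
        = fun ω => (S m ω - (μ[S m|G]) ω) ^ 2 := funext fun ω => (sq _).symm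
    rw [e]
    exact hvar m
  have hmain := aux_key μ hG M K σ Pm (fun m ω => S m ω - (μ[S m|G]) ω)
    hPmeas hPbdd hε2 horthd hvar' hcross
  exact ((condExp_congr_ae hstep1).le.trans hmain)
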